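/- arXiv:1512.06662 — 2 statements merged into one kernel-verified Lean document; each statement's English description precedes it below -/
import Mathlib

section
/- Let V be a finite-dimensional real inner product space with orthonormal basis {e_j}, dual basis {ε^j}, and form the real Clifford algebra Cl(V × V*) of the direct sum with the sum of the inner product on V and the dual inner product on V*. Then for every symmetric polynomial p in n = dim V variables, the element p(e_1ε^1, ..., e_nε^n) of Cl(V × V*) is invariant under the diagonal action of the orthogonal group O(V) (acting on V* via the dual action). -/
open Matrix

noncomputable section

variable (n : ℕ)

/-- The quadratic form on `V × V* ≅ ℝⁿ × ℝⁿ` (the sum of the standard inner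
product on `V` and the dual inner product on `V*`, written in orthonormal
coordinates for `V` and the dual coordinates for `V*`). -/
def Qform : QuadraticForm ℝ ((Fin n → ℝ) × (Fin n → ℝ)) :=
  (QuadraticMap.weightedSumSquares ℝ (fun _ : Fin n => (1 : ℝ))).prod
    (QuadraticMap.weightedSumSquares ℝ (fun _ : Fin n => (1 : ℝ)))

/-- The generator `e_j ∈ V ⊂ Cl(V × V*)`. -/
def Egen (j : Fin n) : CliffordAlgebra (Qform n) :=
  CliffordAlgebra.ι (Qform n) (Pi.single j 1, 0)

/-- The generator `ε^j ∈ V* ⊂ Cl(V × V*)`. -/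
def EpsGen (j : Fin n) : CliffordAlgebra (Qform n) :=
  CliffordAlgebra.ι (Qform n) (0, Pi.single j 1)

/-- Evaluation of a polynomial `p` at the (pairwise commuting) elements
`x_j = e_jε^j` of `Cl(V × V*)`; the product is taken in the order
`j = 0, 1, …, n−1` (for symmetric `p` the order is immaterial since the `x_j`
commute). -/
def evalAtEEps (p : MvPolynomial (Fin n) ℝ) : CliffordAlgebra (Qform n) :=
  Finsupp.sum (AddMonoidAlgebra.coeff p) fun m c =>
    c • (List.ofFn fun j : Fin n => (Egen n j * EpsGen n j) ^ m j).prod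

namespace SymInvAux

open CliffordAlgebra MvPolynomial

/-- Abbreviation for the Clifford algebra. -/
abbrev Cl (n : ℕ) := CliffordAlgebra (Qform n)

lemma Qform_apply (v w : Fin n → ℝ) :
    Qform n (v, w) = (∑ i, v i * v i) + ∑ i, w i * w i := by
  simp [Qform, QuadraticMap.prod_apply, QuadraticMap.weightedSumSquares_apply]

lemma sum_expand (u w : Fin n → ℝ) :
    ∑ i, (u i + w i) * (u i + w i)
      = (∑ i, u i * u i) + (∑ i, w i * w i) + 2 * ∑ i, u i * w i := by
  rw [Finset.mul_sum, ← Finset.sum_add_distrib, ← Finset.sum_add_distrib]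
  exact Finset.sum_congr rfl fun i _ => by ring

lemma isOrtho_E {u w : Fin n → ℝ} (h : ∑ i, u i * w i = 0) :
    (Qform n).IsOrtho (u, 0) (w, 0) := by
  rw [QuadraticMap.isOrtho_def]
  have : ((u, (0 : Fin n → ℝ)) + (w, 0)) = (u + w, 0) := by simp
  rw [this, Qform_apply, Qform_apply, Qform_apply]
  simp only [Pi.add_apply, Pi.zero_apply, mul_zero, Finset.sum_const_zero, add_zero, zero_add]
  rw [sum_expand n u w, h]
  ring

lemma isOrtho_Eps {u w : Fin n → ℝ} (h : ∑ i, u i * w i = 0) :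
    (Qform n).IsOrtho (0, u) (0, w) := by
  rw [QuadraticMap.isOrtho_def]
  have : (((0 : Fin n → ℝ), u) + (0, w)) = (0, u + w) := by simp
  rw [this, Qform_apply, Qform_apply, Qform_apply]
  simp only [Pi.add_apply, Pi.zero_apply, mul_zero, Finset.sum_const_zero, add_zero, zero_add]
  rw [sum_expand n u w, h]
  ring

/-- The basic element `X(u) = e(u)ε(u)`. -/
def XX (u : Fin n → ℝ) : Cl n :=
  ι (Qform n) (u, 0) * ι (Qform n) (0, u)

lemma Egen_mul_EpsGen (j : Fin n) :
    Egen n j * EpsGen n j = XX n (Pi.single j 1) := rfl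

/-- Pure ring computation: four pairwise anticommuting elements. -/
lemma swap4 {A : Type*} [Ring A] {a b c d : A}
    (hac : a * c = -(c * a)) (had : a * d = -(d * a))
    (hbc : b * c = -(c * b)) (hbd : b * d = -(d * b)) :
    a * b * (c * d) = c * d * (a * b) := by
  have h1 : a * b * (c * d) = -(a * c * (b * d)) := by
    rw [show a * b * (c * d) = a * (b * c) * d by noncomm_ring, hbc]; noncomm_ring
  have h2 : a * c * (b * d) = c * a * (d * b) := by rw [hac, hbd]; noncomm_ring
  have h3 : c * a * (d * b) = -(c * d * (a * b)) := by
    rw [show c * a * (d * b) = c * (a * d) * b by noncomm_ring, had]; noncomm_ring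
  rw [h1, h2, h3, neg_neg]

lemma XX_comm {u w : Fin n → ℝ} (h : ∑ i, u i * w i = 0) :
    XX n u * XX n w = XX n w * XX n u := by
  apply swap4
  · exact ι_mul_ι_comm_of_isOrtho (isOrtho_E n h)
  · exact ι_mul_ι_comm_of_isOrtho (QuadraticMap.IsOrtho.inl_inr _ _)
  · exact ι_mul_ι_comm_of_isOrtho (QuadraticMap.IsOrtho.inr_inl _ _)
  · exact ι_mul_ι_comm_of_isOrtho (isOrtho_Eps n h)

lemma XX_sq {u : Fin n → ℝ} (h : ∑ i, u i * u i = 1) :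
    XX n u * XX n u = -1 := by
  have ha : ι (Qform n) (u, 0) * ι (Qform n) (u, 0) = 1 := by
    rw [ι_sq_scalar, Qform_apply]
    simp [h]
  have hb : ι (Qform n) ((0 : Fin n → ℝ), u) * ι (Qform n) (0, u) = 1 := by
    rw [ι_sq_scalar, Qform_apply]
    simp [h]
  have hba : ι (Qform n) ((0 : Fin n → ℝ), u) * ι (Qform n) (u, 0)
      = -(ι (Qform n) (u, 0) * ι (Qform n) (0, u)) :=
    ι_mul_ι_comm_of_isOrtho (QuadraticMap.IsOrtho.inr_inl _ _)
  set a := ι (Qform n) (u, (0 : Fin n → ℝ))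
  set b := ι (Qform n) ((0 : Fin n → ℝ), u)
  calc a * b * (a * b) = a * (b * a) * b := by noncomm_ring
    _ = a * (-(a * b)) * b := by rw [hba]
    _ = -(a * a * (b * b)) := by noncomm_ring
    _ = -1 := by rw [ha, hb, one_mul]

end SymInvAux

namespace SymInvAux

open CliffordAlgebra MvPolynomial

/-- Evaluation of a polynomial at a family of elements via ordered list products. -/
def evalL (z : Fin n → Cl n) (p : MvPolynomial (Fin n) ℝ) : Cl n :=
  Finsupp.sum (AddMonoidAlgebra.coeff p) fun m c => c • (List.ofFn fun j : Fin n => z j ^ m j).prod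

lemma evalAtEEps_eq (p : MvPolynomial (Fin n) ℝ) :
    evalAtEEps n p = evalL n (fun j => XX n (Pi.single j 1)) p := rfl

lemma map_evalL (F : Cl n →ₐ[ℝ] Cl n) (z : Fin n → Cl n) (p : MvPolynomial (Fin n) ℝ) :
    F (evalL n z p) = evalL n (fun j => F (z j)) p := by
  unfold evalL
  rw [map_finsuppSum]
  refine Finsupp.sum_congr fun m _ => ?_
  rw [_root_.map_smul, map_list_prod, List.map_ofFn]
  simp only [Function.comp_def, _root_.map_pow]

section commFamily

variable {n} (z : Fin n → Cl n) (hz : ∀ i j, z i * z j = z j * z i)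

/-- The commutative subalgebra generated by a commuting family. -/
def adj : Subalgebra ℝ (Cl n) := Algebra.adjoin ℝ (Set.range z)

instance : Ring (adj z) := inferInstanceAs (Ring (Algebra.adjoin ℝ (Set.range z)))

/-- The commutative ring structure. -/
abbrev adjComm : CommRing (adj z) :=
  { (inferInstance : Ring (adj z)) with
    mul_comm := (Algebra.adjoinCommRingOfComm ℝ (by
    rintro a ⟨i, rfl⟩ b ⟨j, rfl⟩
    exact hz i j)).mul_comm }

/-- The family as elements of the commutative subalgebra. -/
def zmem (j : Fin n) : adj z := ⟨z j, Algebra.subset_adjoin ⟨j, rfl⟩⟩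

/-- Evaluation as an algebra homomorphism into the Clifford algebra. -/
def evalHom : MvPolynomial (Fin n) ℝ →ₐ[ℝ] Cl n :=
  letI := adjComm z hz
  ((adj z).val).comp (aeval (zmem z))

lemma evalHom_X (j : Fin n) : evalHom z hz (X j) = z j := by
  letI := adjComm z hz
  simp only [evalHom, AlgHom.comp_apply, aeval_X]
  rfl

set_option synthInstance.maxHeartbeats 1000000 in
lemma evalL_eq_evalHom (p : MvPolynomial (Fin n) ℝ) :
    evalL n z p = evalHom z hz p := by
  letI := adjComm z hz
  show _ = ((adj z).val) (aeval (zmem z) p)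
  rw [aeval_def, eval₂]
  rw [map_finsuppSum]
  refine Finsupp.sum_congr fun m _ => ?_
  rw [_root_.map_mul, AlgHom.commutes, Algebra.smul_def]
  congr 1
  rw [Finsupp.prod_fintype _ _ (fun i => pow_zero _), ← List.prod_ofFn,
    map_list_prod, List.map_ofFn]
  congr 1

end commFamily

section twoFamilies

variable {n} (x y : Fin n → Cl n)
  (hxc : ∀ i j, x i * x j = x j * x i) (hyc : ∀ i j, y i * y j = y j * y i)
  (hx2 : ∀ j, x j * x j = -1) (hy2 : ∀ j, y j * y j = -1)
  (hsum : ∑ j, y j = ∑ j, x j)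

include hx2 hy2 hsum in
lemma sum_pow_eq (k : ℕ) : ∑ j, y j ^ k = ∑ j, x j ^ k := by
  rcases Nat.even_or_odd k with ⟨m, hm⟩ | ⟨m, hm⟩
  · have hx : ∀ j : Fin n, x j ^ k = (-1 : Cl n) ^ m := by
      intro j
      rw [hm, show m + m = 2 * m by ring, pow_mul, sq, hx2 j]
    have hy : ∀ j : Fin n, y j ^ k = (-1 : Cl n) ^ m := by
      intro j
      rw [hm, show m + m = 2 * m by ring, pow_mul, sq, hy2 j]
    simp [hx, hy]
  · have hx : ∀ j : Fin n, x j ^ k = (-1 : Cl n) ^ m * x j := by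
      intro j
      rw [hm, pow_succ, pow_mul, sq, hx2 j]
    have hy : ∀ j : Fin n, y j ^ k = (-1 : Cl n) ^ m * y j := by
      intro j
      rw [hm, pow_succ, pow_mul, sq, hy2 j]
    simp only [hx, hy, ← Finset.mul_sum, hsum]

include hx2 hy2 hsum in
lemma evalHom_psum_eq (k : ℕ) :
    evalHom y hyc (psum (Fin n) ℝ k) = evalHom x hxc (psum (Fin n) ℝ k) := by
  have hX : ∀ (z : Fin n → Cl n) (hzc : ∀ i j, z i * z j = z j * z i),
      evalHom z hzc (psum (Fin n) ℝ k) = ∑ j, z j ^ k := by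
    intro z hzc
    rw [psum, _root_.map_sum]
    exact Finset.sum_congr rfl fun j _ => by rw [_root_.map_pow, evalHom_X]
  rw [hX x hxc, hX y hyc]
  exact sum_pow_eq x y hx2 hy2 hsum k

include hx2 hy2 hsum in
lemma evalHom_esymm_eq (k : ℕ) :
    evalHom y hyc (esymm (Fin n) ℝ k) = evalHom x hxc (esymm (Fin n) ℝ k) := by
  induction k using Nat.strong_induction_on with
  | _ k ih =>
    rcases Nat.eq_zero_or_pos k with rfl | hk
    · rw [esymm_zero, _root_.map_one, _root_.map_one]
    · have HX := congrArg (evalHom x hxc) (mul_esymm_eq_sum (Fin n) ℝ k)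
      have HY := congrArg (evalHom y hyc) (mul_esymm_eq_sum (Fin n) ℝ k)
      simp only [_root_.map_mul, _root_.map_natCast, _root_.map_sum, _root_.map_pow, _root_.map_neg, _root_.map_one] at HX HY
      have hRHS :
          ∑ a ∈ Finset.filter (fun a => a.1 < k) (Finset.HasAntidiagonal.antidiagonal k),
              (-1 : Cl n) ^ a.1 * evalHom y hyc (esymm (Fin n) ℝ a.1)
                * evalHom y hyc (psum (Fin n) ℝ a.2)
            = ∑ a ∈ Finset.filter (fun a => a.1 < k) (Finset.HasAntidiagonal.antidiagonal k),
              (-1 : Cl n) ^ a.1 * evalHom x hxc (esymm (Fin n) ℝ a.1)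
                * evalHom x hxc (psum (Fin n) ℝ a.2) := by
        refine Finset.sum_congr rfl fun a ha => ?_
        have ha1 : a.1 < k := (Finset.mem_filter.mp ha).2
        rw [ih a.1 ha1, evalHom_psum_eq x y hxc hyc hx2 hy2 hsum]
      have hkk : (k : Cl n) * evalHom y hyc (esymm (Fin n) ℝ k)
          = (k : Cl n) * evalHom x hxc (esymm (Fin n) ℝ k) := by
        rw [HX, HY, hRHS]
      have hsmul : (k : ℝ) • evalHom y hyc (esymm (Fin n) ℝ k)
          = (k : ℝ) • evalHom x hxc (esymm (Fin n) ℝ k) := by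
        rw [Algebra.smul_def, Algebra.smul_def, _root_.map_natCast, hkk]
      have hk0 : (k : ℝ) ≠ 0 := Nat.cast_ne_zero.mpr hk.ne'
      have := congrArg (fun w => (k : ℝ)⁻¹ • w) hsmul
      simpa [smul_smul, inv_mul_cancel₀ hk0] using this

include hx2 hy2 hsum in
lemma evalHom_eq_of_symmetric (p : MvPolynomial (Fin n) ℝ) (hp : p.IsSymmetric) :
    evalHom y hyc p = evalHom x hxc p := by
  obtain ⟨q, hq⟩ := esymmAlgHom_surjective (σ := Fin n) ℝ
    (n := n) (by simp) ⟨p, (mem_symmetricSubalgebra p).mpr hp⟩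
  have hp' : p = aeval (fun i : Fin n => esymm (Fin n) ℝ (i + 1)) q := by
    rw [← esymmAlgHom_apply, hq]
  have hcomp : (evalHom y hyc).comp (aeval fun i : Fin n => esymm (Fin n) ℝ (i + 1))
      = (evalHom x hxc).comp (aeval fun i : Fin n => esymm (Fin n) ℝ (i + 1)) := by
    apply MvPolynomial.algHom_ext
    intro i
    simp only [AlgHom.comp_apply, aeval_X]
    exact evalHom_esymm_eq x y hxc hyc hx2 hy2 hsum (i + 1)
  calc evalHom y hyc p
      = ((evalHom y hyc).comp (aeval fun i : Fin n => esymm (Fin n) ℝ (i + 1))) q := by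
        rw [AlgHom.comp_apply, ← hp']
    _ = ((evalHom x hxc).comp (aeval fun i : Fin n => esymm (Fin n) ℝ (i + 1))) q := by
        rw [hcomp]
    _ = evalHom x hxc p := by rw [AlgHom.comp_apply, ← hp']

end twoFamilies


lemma XX_sum_eq (A : Matrix (Fin n) (Fin n) ℝ)
    (hrow : ∀ i k, ∑ j, A i j * A k j = if i = k then 1 else 0) :
    ∑ j, XX n (fun i => A i j) = ∑ j, XX n (Pi.single j 1) := by
  have hfst : ∀ j, (((fun i => A i j) : Fin n → ℝ), (0 : Fin n → ℝ))
      = ∑ i, A i j • (((Pi.single i 1 : Fin n → ℝ)), (0 : Fin n → ℝ)) := by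
    intro j
    rw [Prod.ext_iff]
    constructor
    · show _ = (∑ i, A i j • (((Pi.single i 1 : Fin n → ℝ)), (0 : Fin n → ℝ))).1
      rw [Prod.fst_sum]
      funext k
      simp only [Prod.smul_fst, Prod.smul_snd, Finset.sum_apply, Pi.smul_apply,
        Pi.single_apply, smul_eq_mul, mul_ite, mul_one, mul_zero]
      rw [Finset.sum_ite_eq]
      simp
    · show _ = (∑ i, A i j • (((Pi.single i 1 : Fin n → ℝ)), (0 : Fin n → ℝ))).2
      rw [Prod.snd_sum]
      simp
  have hsnd : ∀ j, ((0 : Fin n → ℝ), ((fun i => A i j) : Fin n → ℝ))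
      = ∑ i, A i j • ((0 : Fin n → ℝ), ((Pi.single i 1 : Fin n → ℝ))) := by
    intro j
    rw [Prod.ext_iff]
    constructor
    · show _ = (∑ i, A i j • ((0 : Fin n → ℝ), (Pi.single i 1 : Fin n → ℝ))).1
      rw [Prod.fst_sum]
      simp
    · show _ = (∑ i, A i j • ((0 : Fin n → ℝ), (Pi.single i 1 : Fin n → ℝ))).2
      rw [Prod.snd_sum]
      funext k
      simp only [Prod.smul_fst, Prod.smul_snd, Finset.sum_apply, Pi.smul_apply,
        Pi.single_apply, smul_eq_mul, mul_ite, mul_one, mul_zero]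
      rw [Finset.sum_ite_eq]
      simp
  have ha : ∀ j, ι (Qform n) (((fun i => A i j) : Fin n → ℝ), (0 : Fin n → ℝ))
      = ∑ i, A i j • ι (Qform n) (Pi.single i 1, 0) := by
    intro j
    rw [hfst j, _root_.map_sum]
    exact Finset.sum_congr rfl fun i _ => _root_.map_smul _ _ _
  have hb : ∀ j, ι (Qform n) ((0 : Fin n → ℝ), ((fun i => A i j) : Fin n → ℝ))
      = ∑ i, A i j • ι (Qform n) (0, Pi.single i 1) := by
    intro j
    rw [hsnd j, _root_.map_sum]
    exact Finset.sum_congr rfl fun i _ => _root_.map_smul _ _ _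
  calc ∑ j, XX n (fun i => A i j)
      = ∑ j, ∑ i, ∑ k, (A i j * A k j) •
          (ι (Qform n) ((Pi.single i 1 : Fin n → ℝ), (0 : Fin n → ℝ))
            * ι (Qform n) ((0 : Fin n → ℝ), (Pi.single k 1 : Fin n → ℝ))) := by
        refine Finset.sum_congr rfl fun j _ => ?_
        rw [XX, ha j, hb j, Finset.sum_mul_sum]
        exact Finset.sum_congr rfl fun i _ =>
          Finset.sum_congr rfl fun k _ => smul_mul_smul_comm _ _ _ _
    _ = ∑ i, ∑ k, (∑ j, A i j * A k j) •
          (ι (Qform n) ((Pi.single i 1 : Fin n → ℝ), (0 : Fin n → ℝ))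
            * ι (Qform n) ((0 : Fin n → ℝ), (Pi.single k 1 : Fin n → ℝ))) := by
        rw [Finset.sum_comm]
        refine Finset.sum_congr rfl fun i _ => ?_
        rw [Finset.sum_comm]
        exact Finset.sum_congr rfl fun k _ => (Finset.sum_smul).symm
    _ = ∑ j, XX n (Pi.single j 1) := by
        refine Finset.sum_congr rfl fun i _ => ?_
        simp only [hrow, ite_smul, one_smul, zero_smul]
        rw [Finset.sum_ite_eq]
        simp only [Finset.mem_univ, if_true]
        rfl

end SymInvAux

open SymInvAux CliffordAlgebra MvPolynomial in
/-- for every symmetric polynomial `p` in `n = dim V` variables,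
the element `p(e_1ε^1, …, e_nε^n)` of `Cl(V × V*)` is invariant under the
diagonal action of the orthogonal group `O(V)`, where `g ∈ O(V)` acts on `V*`
by the dual (inverse-transpose) action. -/
theorem symmetric_polynomial_in_e_eps_invariant
    (p : MvPolynomial (Fin n) ℝ) (hp : p.IsSymmetric)
    (g : Matrix.orthogonalGroup (Fin n) ℝ)
    (f : Qform n →qᵢ Qform n)
    (hf : ∀ vφ : (Fin n → ℝ) × (Fin n → ℝ),
      f vφ = (Matrix.mulVec (g : Matrix (Fin n) (Fin n) ℝ) vφ.1,
               Matrix.mulVec (((g⁻¹ : Matrix.orthogonalGroup (Fin n) ℝ) :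
                  Matrix (Fin n) (Fin n) ℝ)ᵀ) vφ.2)) :
    CliffordAlgebra.map f (evalAtEEps n p) = evalAtEEps n p := by
  set A : Matrix (Fin n) (Fin n) ℝ := (g : Matrix (Fin n) (Fin n) ℝ) with hA
  -- the transposed inverse is `A` itself
  have hginv : (((g⁻¹ : Matrix.orthogonalGroup (Fin n) ℝ) :
      Matrix (Fin n) (Fin n) ℝ))ᵀ = A := by
    rw [Matrix.UnitaryGroup.inv_apply, Matrix.star_eq_conjTranspose,
      Matrix.conjTranspose_eq_transpose_of_trivial, Matrix.transpose_transpose]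
  -- columns of A
  set u : Fin n → (Fin n → ℝ) := fun j => fun i => A i j with hu
  -- orthonormality of the columns and rows
  have hAmem : A ∈ Matrix.orthogonalGroup (Fin n) ℝ := g.2
  have hcol : ∀ j k, ∑ i, u j i * u k i = if j = k then 1 else 0 := by
    intro j k
    have h1 : star A * A = 1 := (Matrix.mem_orthogonalGroup_iff' (Fin n) ℝ).mp hAmem
    have := congrFun (congrFun h1 j) k
    simp only [Matrix.mul_apply, Matrix.star_apply, star_trivial, Matrix.one_apply] at this
    simpa [hu] using this
  have hrow : ∀ i k, ∑ j, A i j * A k j = if i = k then 1 else 0 := by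
    intro i k
    have h1 : A * star A = 1 := (Matrix.mem_orthogonalGroup_iff (Fin n) ℝ).mp hAmem
    have := congrFun (congrFun h1 i) k
    simp only [Matrix.mul_apply, Matrix.star_apply, star_trivial, Matrix.one_apply] at this
    simpa using this
  -- the families x and y
  set x : Fin n → Cl n := fun j => XX n (Pi.single j 1) with hx
  set y : Fin n → Cl n := fun j => XX n (u j) with hy
  -- dot products of the standard basis
  have hdelta : ∀ j k : Fin n, ∑ i, (Pi.single j 1 : Fin n → ℝ) i * (Pi.single k 1 : Fin n → ℝ) i
      = if j = k then 1 else 0 := by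
    intro j k
    rcases eq_or_ne j k with rfl | hne
    · simp [Pi.single_apply]
    · simp [Pi.single_apply, Finset.sum_ite_eq, hne, Ne.symm hne]
  -- properties of x
  have hxc : ∀ i j, x i * x j = x j * x i := by
    intro i j
    rcases eq_or_ne i j with rfl | hne
    · rfl
    · exact XX_comm n (by rw [hdelta i j, if_neg hne])
  have hx2 : ∀ j, x j * x j = -1 := fun j => XX_sq n (by rw [hdelta j j, if_pos rfl])
  -- properties of y
  have hyc : ∀ i j, y i * y j = y j * y i := by
    intro i j
    rcases eq_or_ne i j with rfl | hne
    · rfl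
    · exact XX_comm n (by rw [hcol i j, if_neg hne])
  have hy2 : ∀ j, y j * y j = -1 := fun j => XX_sq n (by rw [hcol j j, if_pos rfl])
  -- map f sends x j to y j
  have hmapx : ∀ j, CliffordAlgebra.map f (x j) = y j := by
    intro j
    have hcolv : A *ᵥ (Pi.single j 1 : Fin n → ℝ) = u j := by
      rw [Matrix.mulVec_single_one]
      funext i
      simp [hu, Matrix.transpose_apply]
    have hE : CliffordAlgebra.map f
        (CliffordAlgebra.ι (Qform n) ((Pi.single j 1 : Fin n → ℝ), (0 : Fin n → ℝ)))
        = CliffordAlgebra.ι (Qform n) (u j, 0) := by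
      rw [CliffordAlgebra.map_apply_ι, hf]
      simp only [Matrix.mulVec_zero, hcolv]
    have hEps : CliffordAlgebra.map f
        (CliffordAlgebra.ι (Qform n) ((0 : Fin n → ℝ), (Pi.single j 1 : Fin n → ℝ)))
        = CliffordAlgebra.ι (Qform n) (0, u j) := by
      rw [CliffordAlgebra.map_apply_ι, hf]
      simp only [Matrix.mulVec_zero, hginv, hcolv]
    simp only [hx, hy, XX, _root_.map_mul, hE, hEps]
  -- the sums agree
  have hsum : ∑ j, y j = ∑ j, x j := XX_sum_eq n A hrow
  -- conclude
  rw [evalAtEEps_eq, map_evalL n (CliffordAlgebra.map f) _ p]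
  have : (fun j => CliffordAlgebra.map f (XX n (Pi.single j 1))) = y := by
    funext j; exact hmapx j
  rw [this]
  rw [evalL_eq_evalHom y hyc p, evalL_eq_evalHom x hxc p]
  exact evalHom_eq_of_symmetric x y hxc hyc hx2 hy2 hsum p hp
end
end

section
/- Let T = {(z₁,z₂,z₃) ∈ U³ : z₁z₂z₃ = 1} with the permutation action of S₃, and let T^∨ = T/μ₃ be the quotient by the diagonal cube roots of unity μ₃ = {(η,η,η) : η³ = 1}, with the induced S₃-action. Then T has exactly three S₃-fixed points, namely (1,1,1), (ω,ω,ω), (ω²,ω²,ω²) with ω = e^{2πi/3}, while T^∨ has exactly one S₃-fixed point; hence T and T^∨ are not S₃-equivariantly isomorphic. -/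
open Real

noncomputable section

/-- The maximal torus `T = {(z₁,z₂,z₃) ∈ U³ : z₁z₂z₃ = 1}` of `SU(3)`. -/
def T333 : Subgroup (Fin 3 → Circle) where
  carrier := {z | z 0 * z 1 * z 2 = 1}
  one_mem' := by simp
  mul_mem' := by
    intro a b ha hb
    simp only [Set.mem_setOf_eq, Pi.mul_apply] at *
    calc a 0 * b 0 * (a 1 * b 1) * (a 2 * b 2)
        = (a 0 * a 1 * a 2) * (b 0 * b 1 * b 2) := by
          simp [mul_assoc, mul_comm, mul_left_comm]
      _ = 1 := by rw [ha, hb, mul_one]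
  inv_mem' := by
    intro a ha
    simp only [Set.mem_setOf_eq, Pi.inv_apply] at *
    calc (a 0)⁻¹ * (a 1)⁻¹ * (a 2)⁻¹ = (a 0 * a 1 * a 2)⁻¹ := by
          simp [mul_inv_rev, mul_assoc, mul_comm, mul_left_comm]
      _ = 1 := by rw [ha, inv_one]

/-- The permutation action of `S₃` on `T`. -/
def permAct (σ : Equiv.Perm (Fin 3)) (t : T333) : T333 :=
  ⟨fun i => (t : Fin 3 → Circle) (σ⁻¹ i), by
    have h3 : (t : Fin 3 → Circle) (σ⁻¹ 0) * (t : Fin 3 → Circle) (σ⁻¹ 1)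
        * (t : Fin 3 → Circle) (σ⁻¹ 2)
        = (t : Fin 3 → Circle) 0 * (t : Fin 3 → Circle) 1 * (t : Fin 3 → Circle) 2 := by
      simpa [Fin.prod_univ_three] using
        Equiv.prod_comp σ⁻¹ (fun i => (t : Fin 3 → Circle) i)
    show (t : Fin 3 → Circle) (σ⁻¹ 0) * (t : Fin 3 → Circle) (σ⁻¹ 1)
        * (t : Fin 3 → Circle) (σ⁻¹ 2) = 1
    rw [h3]; exact t.2⟩

/-- The permutation action as a group homomorphism `T → T` for each `σ`. -/
def permActHom (σ : Equiv.Perm (Fin 3)) : T333 →* T333 where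
  toFun := permAct σ
  map_one' := by ext i; rfl
  map_mul' := by intro a b; ext i; rfl

/-- The diagonal cube roots of unity `μ₃ = {(η,η,η) : η³ = 1} ⊆ T`. -/
def Z3 : Subgroup T333 where
  carrier := {t | ∃ η : Circle, η ^ 3 = 1 ∧ ∀ i, (t : Fin 3 → Circle) i = η}
  one_mem' := ⟨1, by simp, fun i => rfl⟩
  mul_mem' := by
    rintro a b ⟨η, hη, ha⟩ ⟨ζ, hζ, hb⟩
    exact ⟨η * ζ, by rw [mul_pow, hη, hζ, mul_one],
      fun i => by simp [Subgroup.coe_mul, Pi.mul_apply, ha i, hb i]⟩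
  inv_mem' := by
    rintro a ⟨η, hη, ha⟩
    exact ⟨η⁻¹, by rw [inv_pow, hη, inv_one],
      fun i => by simp [Pi.inv_apply, ha i]⟩

instance : Z3.Normal := by
  constructor
  intro a ha g
  have : g * a * g⁻¹ = a := by rw [mul_comm g a, mul_inv_cancel_right]
  rwa [this]

/-- The induced action of `S₃` on the quotient `T^∨ = T/μ₃`. -/
def permActQ (σ : Equiv.Perm (Fin 3)) : T333 ⧸ Z3 → T333 ⧸ Z3 :=
  QuotientGroup.map Z3 Z3 (permActHom σ) (by
    rintro t ⟨η, hη, ht⟩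
    exact ⟨η, hη, fun i => ht (σ⁻¹ i)⟩)


/-- Auxiliary: the primitive cube root of unity in `ℂ`. -/
def ωC : ℂ := Complex.exp (2 * π * Complex.I / 3)

lemma ωC_pow3 : ωC ^ 3 = 1 := by
  rw [ωC, ← Complex.exp_nat_mul]
  rw [show (3 : ℕ) * (2 * ↑π * Complex.I / 3) = 2 * ↑π * Complex.I by push_cast; ring]
  exact Complex.exp_two_pi_mul_I

lemma ωC_ne_one : ωC ≠ 1 := by
  intro h
  rw [ωC, Complex.exp_eq_one_iff] at h
  obtain ⟨n, hn⟩ := h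
  have h0 : ((1 : ℂ) - 3 * n) * (2 * π * Complex.I) = 0 := by linear_combination 3 * hn
  rcases mul_eq_zero.mp h0 with h' | h'
  · have h1 : ((3 * n : ℤ) : ℂ) = 1 := by push_cast; linear_combination -h'
    have : (3 * n : ℤ) = 1 := by exact_mod_cast h1
    omega
  · have hπ : (π : ℂ) ≠ 0 := by exact_mod_cast Real.pi_ne_zero
    simp [Complex.I_ne_zero, hπ] at h'

lemma ωC_sum : ωC ^ 2 + ωC + 1 = 0 := by
  have h2 : (ωC - 1) * (ωC ^ 2 + ωC + 1) = 0 := by linear_combination ωC_pow3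
  rcases mul_eq_zero.mp h2 with h' | h'
  · exact absurd (sub_eq_zero.mp h') ωC_ne_one
  · exact h'

lemma cube_roots (z : ℂ) (h : z ^ 3 = 1) : z = 1 ∨ z = ωC ∨ z = ωC ^ 2 := by
  have key : (z - 1) * ((z - ωC) * (z - ωC ^ 2)) = 0 := by
    linear_combination h - (z ^ 2 - z) * ωC_sum + (z - 1) * ωC_pow3
  rcases mul_eq_zero.mp key with h' | h'
  · exact Or.inl (sub_eq_zero.mp h')
  · rcases mul_eq_zero.mp h' with h'' | h''
    · exact Or.inr (Or.inl (sub_eq_zero.mp h''))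
    · exact Or.inr (Or.inr (sub_eq_zero.mp h''))

lemma ωC_sq_ne_one : ωC ^ 2 ≠ 1 := by
  intro h
  exact ωC_ne_one (by linear_combination ωC_pow3 - ωC * h)

lemma ωC_ne_sq : ωC ≠ ωC ^ 2 := by
  intro h
  have h3 : (3 : ℂ) = 0 := by
    linear_combination (-(ωC - ωC ^ 2) - 2 * (ωC ^ 2 + ωC + 1)) * h +
      (-(ωC ^ 2 + ωC + 1) + 4) * ωC_sum
  norm_num at h3

/-- The primitive cube root of unity on the circle. -/
def ωS : Circle := Circle.exp (2 * π / 3)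

lemma ωS_coe : (ωS : ℂ) = ωC := by
  rw [ωS, Circle.coe_exp, ωC]
  congr 1
  push_cast
  ring

lemma ωS_pow3 : ωS ^ 3 = 1 := by
  apply Circle.ext
  show ((ωS : ℂ)) ^ 3 = 1
  rw [ωS_coe]; exact ωC_pow3

lemma ωS_ne_one : ωS ≠ 1 := by
  intro h
  exact ωC_ne_one (by rw [← ωS_coe, h]; rfl)

lemma coePow (x : Circle) (n : ℕ) : ((x ^ n : Circle) : ℂ) = (x : ℂ) ^ n := rfl

lemma ωS_sq_ne_one : ωS ^ 2 ≠ 1 := by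
  intro h
  apply ωC_sq_ne_one
  have := congrArg (fun x : Circle => (x : ℂ)) h
  simp only [coePow, OneMemClass.coe_one, ωS_coe] at this
  simpa using this

lemma ωS_ne_sq : ωS ≠ ωS ^ 2 := by
  intro h
  apply ωC_ne_sq
  have := congrArg (fun x : Circle => (x : ℂ)) h
  simp only [coePow, ωS_coe] at this
  simpa using this

lemma circle_cube_roots (η : Circle) (h : η ^ 3 = 1) :
    η = 1 ∨ η = ωS ∨ η = ωS ^ 2 := by
  have hc : (η : ℂ) ^ 3 = 1 := by
    have := congrArg (fun x : Circle => (x : ℂ)) h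
    simpa only [coePow, Circle.coe_one] using this
  rcases cube_roots (η : ℂ) hc with h' | h' | h'
  · exact Or.inl (Circle.ext h')
  · exact Or.inr (Or.inl (Circle.ext (by rw [h', ωS_coe])))
  · exact Or.inr (Or.inr (Circle.ext (by rw [coePow, ωS_coe]; exact h')))

lemma disj_pow3 (η : Circle) (h : η = 1 ∨ η = ωS ∨ η = ωS ^ 2) : η ^ 3 = 1 := by
  rcases h with h | h | h
  · simp [h]
  · rw [h]; exact ωS_pow3
  · rw [h, ← pow_mul, show 2 * 3 = 3 * 2 by ring, pow_mul, ωS_pow3, one_pow]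

/-- The diagonal element of `T333` with entries `η` (for `η³ = 1`). -/
def dg (η : Circle) (h : η ^ 3 = 1) : T333 :=
  ⟨fun _ => η, by
    show η * η * η = 1
    rw [← h, pow_succ, pow_succ, pow_one]⟩

lemma diag_fixed (t : T333) (h : ∀ i, (t : Fin 3 → Circle) i = (t : Fin 3 → Circle) 0) :
    ∀ σ : Equiv.Perm (Fin 3), permAct σ t = t := by
  intro σ
  apply Subtype.ext
  funext i
  show (t : Fin 3 → Circle) (σ⁻¹ i) = (t : Fin 3 → Circle) i
  rw [h (σ⁻¹ i), h i]

lemma fixed_diag (t : T333) (h : ∀ σ : Equiv.Perm (Fin 3), permAct σ t = t) :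
    ∀ i, (t : Fin 3 → Circle) i = (t : Fin 3 → Circle) 0 := by
  have h01 := congrFun (congrArg Subtype.val (h (Equiv.swap 0 1))) 0
  have h12 := congrFun (congrArg Subtype.val (h (Equiv.swap 1 2))) 1
  simp only [permAct, Equiv.swap_inv, Equiv.swap_apply_left] at h01 h12
  intro i
  fin_cases i
  · rfl
  · simpa using h01
  · simpa using h12.trans h01

lemma t_pow3 (t : T333) (h : ∀ i, (t : Fin 3 → Circle) i = (t : Fin 3 → Circle) 0) :
    (t : Fin 3 → Circle) 0 ^ 3 = 1 := by
  have ht : (t : Fin 3 → Circle) 0 * (t : Fin 3 → Circle) 1 * (t : Fin 3 → Circle) 2 = 1 := t.2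
  rw [h 1, h 2] at ht
  rw [pow_succ, pow_succ, pow_one]
  exact ht

lemma fwd (t : T333) (h : ∀ σ : Equiv.Perm (Fin 3), permAct σ t = t) :
    ∃ η : Circle, (η = 1 ∨ η = Circle.exp (2 * π / 3) ∨ η = Circle.exp (2 * π / 3) ^ 2)
      ∧ ∀ i, (t : Fin 3 → Circle) i = η := by
  refine ⟨(t : Fin 3 → Circle) 0, ?_, fixed_diag t h⟩
  exact circle_cube_roots _ (t_pow3 t (fixed_diag t h))

/-- The fixed points of `T` are in bijection with `{1, ω, ω²}`. -/
def fixedEquiv : {t : T333 // ∀ σ : Equiv.Perm (Fin 3), permAct σ t = t}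
    ≃ {η : Circle // η = 1 ∨ η = ωS ∨ η = ωS ^ 2} where
  toFun t := ⟨(t.1 : Fin 3 → Circle) 0,
    circle_cube_roots _ (t_pow3 t.1 (fixed_diag t.1 t.2))⟩
  invFun η := ⟨dg η.1 (disj_pow3 η.1 η.2), diag_fixed _ (fun _ => rfl)⟩
  left_inv t := by
    apply Subtype.ext
    apply Subtype.ext
    funext i
    exact (fixed_diag t.1 t.2 i).symm
  right_inv η := by apply Subtype.ext; rfl

/-- `T` has exactly three `S₃`-fixed points, namely `(1,1,1)`,
`(ω,ω,ω)`, `(ω²,ω²,ω²)` with `ω = e^{2πi/3}`, while `T^∨ = T/μ₃` has exactly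
one `S₃`-fixed point; hence `T` and `T^∨` are not `S₃`-equivariantly
isomorphic. -/
theorem fixed_points_T_and_Tdual :
    ({t : T333 | ∀ σ : Equiv.Perm (Fin 3), permAct σ t = t}
      = {t : T333 | ∃ η : Circle,
          (η = 1 ∨ η = Circle.exp (2 * π / 3) ∨ η = Circle.exp (2 * π / 3) ^ 2)
          ∧ ∀ i, (t : Fin 3 → Circle) i = η}) ∧
    Nat.card {t : T333 // ∀ σ : Equiv.Perm (Fin 3), permAct σ t = t} = 3 ∧
    Nat.card {q : T333 ⧸ Z3 // ∀ σ : Equiv.Perm (Fin 3), permActQ σ q = q} = 1 ∧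
    ¬ ∃ e : T333 ≃ₜ (T333 ⧸ Z3),
        ∀ (σ : Equiv.Perm (Fin 3)) (t : T333),
          e (permAct σ t) = permActQ σ (e t) := by
  have hω3 := ωS_pow3
  constructor
  · -- part 1: the set of fixed points
    ext t
    constructor
    · exact fun h => fwd t h
    · rintro ⟨η, _, hd⟩
      exact diag_fixed t (fun i => by rw [hd i, hd 0])
  have c2 : Nat.card {t : T333 // ∀ σ : Equiv.Perm (Fin 3), permAct σ t = t} = 3 := by
    rw [Nat.card_congr fixedEquiv]
    have hset : Nat.card {η : Circle // η = 1 ∨ η = ωS ∨ η = ωS ^ 2}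
        = Nat.card (({1, ωS, ωS ^ 2} : Set Circle)) := by
      exact Nat.card_congr (Equiv.subtypeEquivRight (fun η => by
        simp [Set.mem_insert_iff]))
    rw [hset, Nat.card_coe_set_eq]
    rw [Set.ncard_insert_of_notMem (by
      simp only [Set.mem_insert_iff, Set.mem_singleton_iff]
      push_neg
      exact ⟨fun h => ωS_ne_one h.symm, fun h => ωS_sq_ne_one h.symm⟩)]
    rw [Set.ncard_pair ωS_ne_sq]
  have c3 : Nat.card {q : T333 ⧸ Z3 // ∀ σ : Equiv.Perm (Fin 3), permActQ σ q = q} = 1 := by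
    have key : ∀ a : {q : T333 ⧸ Z3 // ∀ σ : Equiv.Perm (Fin 3), permActQ σ q = q},
        a.1 = (1 : T333 ⧸ Z3) := by
      rintro ⟨q, hq⟩
      induction q using QuotientGroup.induction_on with
      | H t =>
      show (t : T333 ⧸ Z3) = 1
      have hmem : ∀ σ : Equiv.Perm (Fin 3), (permAct σ t)⁻¹ * t ∈ Z3 := by
        intro σ
        have := hq σ
        rw [permActQ, QuotientGroup.map_mk] at this
        exact QuotientGroup.eq.mp this
      have heq : ∀ σ : Equiv.Perm (Fin 3), ∀ i j : Fin 3, σ⁻¹ i = i →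
          (t : Fin 3 → Circle) (σ⁻¹ j) = (t : Fin 3 → Circle) j := by
        intro σ i j hi
        obtain ⟨η, _, hη⟩ := hmem σ
        have hη1 : ((t : Fin 3 → Circle) (σ⁻¹ i))⁻¹ * (t : Fin 3 → Circle) i = η := hη i
        have hη2 : ((t : Fin 3 → Circle) (σ⁻¹ j))⁻¹ * (t : Fin 3 → Circle) j = η := hη j
        rw [hi, inv_mul_cancel] at hη1
        rw [← hη1] at hη2
        exact inv_mul_eq_one.mp hη2
      have h01 : (t : Fin 3 → Circle) 1 = (t : Fin 3 → Circle) 0 := by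
        have := heq (Equiv.swap 0 1) 2 0 (by decide)
        simpa [Equiv.swap_inv, Equiv.swap_apply_left] using this
      have h12 : (t : Fin 3 → Circle) 2 = (t : Fin 3 → Circle) 1 := by
        have := heq (Equiv.swap 1 2) 0 1 (by decide)
        simpa [Equiv.swap_inv, Equiv.swap_apply_left] using this
      have hdiag : ∀ i, (t : Fin 3 → Circle) i = (t : Fin 3 → Circle) 0 := by
        intro i; fin_cases i
        · rfl
        · exact h01
        · exact h12.trans h01
      apply (QuotientGroup.eq_one_iff t).mpr
      exact ⟨(t : Fin 3 → Circle) 0, t_pow3 t hdiag, hdiag⟩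
    haveI : Nonempty {q : T333 ⧸ Z3 // ∀ σ : Equiv.Perm (Fin 3), permActQ σ q = q} :=
      ⟨⟨1, fun σ => by rw [permActQ, show (1 : T333 ⧸ Z3) = ((1 : T333) : T333 ⧸ Z3) from rfl,
        QuotientGroup.map_mk, map_one]⟩⟩
    haveI : Subsingleton {q : T333 ⧸ Z3 // ∀ σ : Equiv.Perm (Fin 3), permActQ σ q = q} :=
      ⟨fun a b => Subtype.ext ((key a).trans (key b).symm)⟩
    exact Nat.card_unique
  refine ⟨c2, c3, ?_⟩
  rintro ⟨e, he⟩
  have hsymm : ∀ (σ : Equiv.Perm (Fin 3)) (q : T333 ⧸ Z3),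
      e.symm (permActQ σ q) = permAct σ (e.symm q) := by
    intro σ q
    apply e.injective
    rw [he, e.apply_symm_apply, e.apply_symm_apply]
  have E : {t : T333 // ∀ σ : Equiv.Perm (Fin 3), permAct σ t = t}
      ≃ {q : T333 ⧸ Z3 // ∀ σ : Equiv.Perm (Fin 3), permActQ σ q = q} :=
    { toFun := fun t => ⟨e t.1, fun σ => by rw [← he, t.2 σ]⟩
      invFun := fun q => ⟨e.symm q.1, fun σ => by rw [← hsymm, q.2 σ]⟩
      left_inv := fun t => Subtype.ext (e.symm_apply_apply t.1)
      right_inv := fun q => Subtype.ext (e.apply_symm_apply q.1) }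
  have h3 := Nat.card_congr E
  rw [c2, c3] at h3
  exact absurd h3 (by norm_num)
end
end
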